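/- For every $\varepsilon > 0$ and $m \in \mathbb{N}$ there exist $N \in \mathbb{N}$ and $\xi > 0$ such that for any probability space $(V,\mathcal{B},\mu)$ and any sets $X_1, \ldots, X_N \in \mathcal{B}$ with $\mu(X_i) \ge \varepsilon$ for all $i$, there is a subset $I \subseteq \{1,\ldots,N\}$ with $|I| \ge m$ and $\mu(\bigcap_{i \in I} X_i) > \xi$. -/

import Mathlib

open MeasureTheory ENNReal

lemma bonferroni {V : Type} [MeasurableSpace V] (μ : Measure V) {ι : Type} [DecidableEq ι]
    (X : ι → Set V) (hX : ∀ i, MeasurableSet (X i)) (t : Finset ι) :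
    ∑ i ∈ t, μ (X i) ≤ μ (⋃ i ∈ t, X i) + ∑ p ∈ t.offDiag, μ (X p.1 ∩ X p.2) := by
  induction t using Finset.induction_on with
  | empty => simp
  | insert _ _ ha =>
    rename_i a s ih
    have hmeasU : MeasurableSet (⋃ i ∈ s, X i) :=
      s.measurableSet_biUnion (fun i _ => hX i)
    rw [Finset.sum_insert ha]
    calc μ (X a) + ∑ i ∈ s, μ (X i)
        ≤ μ (X a) + (μ (⋃ i ∈ s, X i) + ∑ p ∈ s.offDiag, μ (X p.1 ∩ X p.2)) := by
          gcongr
      _ = (μ (X a) + μ (⋃ i ∈ s, X i)) + ∑ p ∈ s.offDiag, μ (X p.1 ∩ X p.2) := by ring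
      _ = (μ (X a ∪ ⋃ i ∈ s, X i) + μ (X a ∩ ⋃ i ∈ s, X i)) + ∑ p ∈ s.offDiag, μ (X p.1 ∩ X p.2) := by
          rw [measure_union_add_inter _ hmeasU]
      _ ≤ (μ (⋃ i ∈ insert a s, X i) + ∑ i ∈ s, μ (X a ∩ X i)) + ∑ p ∈ s.offDiag, μ (X p.1 ∩ X p.2) := by
          gcongr
          · rw [Finset.set_biUnion_insert]
          · rw [Set.inter_iUnion₂]
            exact measure_biUnion_finset_le s _
      _ = μ (⋃ i ∈ insert a s, X i) + (∑ i ∈ s, μ (X a ∩ X i) + ∑ p ∈ s.offDiag, μ (X p.1 ∩ X p.2)) := by ring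
      _ ≤ μ (⋃ i ∈ insert a s, X i) + ∑ p ∈ (insert a s).offDiag, μ (X p.1 ∩ X p.2) := by
          gcongr
          have h1 : ∑ i ∈ s, μ (X a ∩ X i) = ∑ p ∈ ({a} ×ˢ s), μ (X p.1 ∩ X p.2) := by
            rw [Finset.sum_product, Finset.sum_singleton]
          rw [h1, ← Finset.sum_union]
          · apply Finset.sum_le_sum_of_subset
            intro p hp
            rcases Finset.mem_union.mp hp with h | h
            · rcases Finset.mem_product.mp h with ⟨h1', h2'⟩
              rw [Finset.mem_singleton] at h1'
              refine Finset.mem_offDiag.mpr ⟨?_, ?_, ?_⟩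
              · simp [h1']
              · exact Finset.mem_insert_of_mem h2'
              · intro he; rw [h1'] at he; rw [← he] at h2'; exact ha h2'
            · rcases Finset.mem_offDiag.mp h with ⟨h1', h2', h3'⟩
              exact Finset.mem_offDiag.mpr ⟨Finset.mem_insert_of_mem h1', Finset.mem_insert_of_mem h2', h3'⟩
          · rw [Finset.disjoint_left]
            rintro p hp hp'
            rcases Finset.mem_product.mp hp with ⟨h1', _⟩
            rw [Finset.mem_singleton] at h1'
            exact ha (h1' ▸ (Finset.mem_offDiag.mp hp').1)

lemma pair_lemma {V : Type} [MeasurableSpace V] (μ : Measure V) [IsProbabilityMeasure μ]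
    {ι : Type} [DecidableEq ι] (X : ι → Set V) (hX : ∀ i, MeasurableSet (X i))
    {ε : ℝ} {n : ℕ} (hn2 : 2 ≤ n) (hnε : 2 ≤ (n : ℝ) * ε)
    (t : Finset ι) (hcard : n ≤ t.card)
    (hmeas : ∀ i ∈ t, ENNReal.ofReal ε ≤ μ (X i)) :
    ∃ i ∈ t, ∃ j ∈ t, i ≠ j ∧ ENNReal.ofReal (1/(4*(n:ℝ)^2)) < μ (X i ∩ X j) := by
  obtain ⟨u, hut, hucard⟩ := Finset.exists_subset_card_eq hcard
  by_contra hcon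
  push_neg at hcon
  have hall : ∀ p ∈ u.offDiag, μ (X p.1 ∩ X p.2) ≤ ENNReal.ofReal (1/(4*(n:ℝ)^2)) := by
    rintro ⟨i, j⟩ hp
    rcases Finset.mem_offDiag.mp hp with ⟨hi, hj, hij⟩
    exact hcon i (hut hi) j (hut hj) hij
  have hnpos : (0:ℝ) < n := by positivity
  have key := bonferroni μ X hX u
  have hlow : (2 : ℝ≥0∞) ≤ ∑ i ∈ u, μ (X i) := by
    calc (2 : ℝ≥0∞) = ENNReal.ofReal 2 := by simp
      _ ≤ ENNReal.ofReal ((n : ℝ) * ε) := ENNReal.ofReal_le_ofReal hnε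
      _ = (n : ℝ≥0∞) * ENNReal.ofReal ε := by
          rw [ENNReal.ofReal_mul (by positivity)]; simp
      _ = ∑ _i ∈ u, ENNReal.ofReal ε := by
          rw [Finset.sum_const, hucard, nsmul_eq_mul]
      _ ≤ ∑ i ∈ u, μ (X i) := Finset.sum_le_sum (fun i hi => hmeas i (hut hi))
  have hup : μ (⋃ i ∈ u, X i) + ∑ p ∈ u.offDiag, μ (X p.1 ∩ X p.2) < 2 := by
    have h1 : μ (⋃ i ∈ u, X i) ≤ 1 := prob_le_one
    have h2 : ∑ p ∈ u.offDiag, μ (X p.1 ∩ X p.2) ≤ ENNReal.ofReal (1/2) := by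
      calc ∑ p ∈ u.offDiag, μ (X p.1 ∩ X p.2)
          ≤ ∑ _p ∈ u.offDiag, ENNReal.ofReal (1/(4*(n:ℝ)^2)) := Finset.sum_le_sum hall
        _ = (u.offDiag.card : ℝ≥0∞) * ENNReal.ofReal (1/(4*(n:ℝ)^2)) := by
            rw [Finset.sum_const, nsmul_eq_mul]
        _ ≤ ((n^2 : ℕ) : ℝ≥0∞) * ENNReal.ofReal (1/(4*(n:ℝ)^2)) := by
            gcongr
            exact_mod_cast (by rw [Finset.offDiag_card, hucard]; exact Nat.sub_le _ _ |>.trans (le_of_eq (sq n).symm) : u.offDiag.card ≤ n^2)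
        _ = ENNReal.ofReal ((n^2 : ℕ) * (1/(4*(n:ℝ)^2))) := by
            rw [ENNReal.ofReal_mul (by positivity), ENNReal.ofReal_natCast]
        _ = ENNReal.ofReal (1/4) := by
            congr 1
            push_cast
            field_simp
        _ ≤ ENNReal.ofReal (1/2) := ENNReal.ofReal_le_ofReal (by norm_num)
    calc μ (⋃ i ∈ u, X i) + ∑ p ∈ u.offDiag, μ (X p.1 ∩ X p.2)
        ≤ 1 + ENNReal.ofReal (1/2) := by gcongr
      _ < 1 + 1 := by
          gcongr
          · exact one_ne_top
          · rw [ENNReal.ofReal_lt_one]; norm_num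
      _ = 2 := by norm_num
  exact absurd (hlow.trans key) (not_le.mpr hup)

lemma extract_pairs {V : Type} [MeasurableSpace V] (μ : Measure V) [IsProbabilityMeasure μ]
    {ι : Type} [DecidableEq ι] (X : ι → Set V) (hX : ∀ i, MeasurableSet (X i))
    {ε : ℝ} {n : ℕ} (hn2 : 2 ≤ n) (hnε : 2 ≤ (n : ℝ) * ε)
    (hmeas : ∀ i, ENNReal.ofReal ε ≤ μ (X i)) :
    ∀ (k : ℕ) (s : Finset ι), n * k ≤ s.card →
    ∃ P : Finset (ι × ι), P.card = k ∧
      (∀ p ∈ P, p.1 ∈ s ∧ p.2 ∈ s ∧ p.1 ≠ p.2 ∧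
        ENNReal.ofReal (1/(4*(n:ℝ)^2)) < μ (X p.1 ∩ X p.2)) ∧
      (∀ p ∈ P, ∀ q ∈ P, p ≠ q → p.1 ≠ q.1 ∧ p.1 ≠ q.2 ∧ p.2 ≠ q.1 ∧ p.2 ≠ q.2) := by
  intro k
  induction k with
  | zero => intro s _; exact ⟨∅, by simp⟩
  | succ k ih =>
    intro s hs
    have hn : n ≤ s.card := le_trans (Nat.le_mul_of_pos_right n (Nat.succ_pos k)) hs
    obtain ⟨i, hi, j, hj, hij, hμij⟩ :=
      pair_lemma μ X hX hn2 hnε s hn (fun i _ => hmeas i)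
    have hcard' : n * k ≤ (s \ {i, j}).card := by
      have h2 : ({i, j} : Finset ι).card ≤ 2 := Finset.card_insert_le _ _ |>.trans (by simp)
      have := Finset.le_card_sdiff ({i, j} : Finset ι) s
      have hnk : n * k + 2 ≤ n * (k + 1) := by rw [Nat.mul_succ]; omega
      omega
    obtain ⟨P, hPcard, hPgood, hPdis⟩ := ih (s \ {i, j}) hcard'
    have hPnotij : ∀ p ∈ P, p.1 ≠ i ∧ p.1 ≠ j ∧ p.2 ≠ i ∧ p.2 ≠ j := by
      intro p hp
      obtain ⟨h1, h2, -, -⟩ := hPgood p hp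
      rw [Finset.mem_sdiff] at h1 h2
      simp only [Finset.mem_insert, Finset.mem_singleton] at h1 h2
      exact ⟨fun h => h1.2 (Or.inl h), fun h => h1.2 (Or.inr h),
             fun h => h2.2 (Or.inl h), fun h => h2.2 (Or.inr h)⟩
    have hnew : (i, j) ∉ P := by
      intro h
      exact (hPnotij _ h).1 rfl
    refine ⟨insert (i, j) P, ?_, ?_, ?_⟩
    · rw [Finset.card_insert_of_notMem hnew, hPcard]
    · intro p hp
      rcases Finset.mem_insert.mp hp with rfl | hp
      · exact ⟨hi, hj, hij, hμij⟩
      · obtain ⟨h1, h2, h3, h4⟩ := hPgood p hp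
        exact ⟨(Finset.mem_sdiff.mp h1).1, (Finset.mem_sdiff.mp h2).1, h3, h4⟩
    · intro p hp q hq hpq
      rcases Finset.mem_insert.mp hp with rfl | hp <;>
        rcases Finset.mem_insert.mp hq with rfl | hq
      · exact absurd rfl hpq
      · obtain ⟨a, b, c, d⟩ := hPnotij q hq
        exact ⟨fun h => a h.symm, fun h => c h.symm, fun h => b h.symm, fun h => d h.symm⟩
      · obtain ⟨a, b, c, d⟩ := hPnotij p hp
        exact ⟨a, b, c, d⟩
      · exact hPdis p hp q hq hpq

def BergStmt (m : ℕ) (ε : ℝ) : Prop :=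
  ∃ (N : ℕ) (ξ : ℝ), 0 < ξ ∧
    ∀ (V : Type) (mV : MeasurableSpace V) (μ : Measure V), IsProbabilityMeasure μ →
    ∀ X : Fin N → Set V, (∀ i, MeasurableSet (X i)) →
      (∀ i, ENNReal.ofReal ε ≤ μ (X i)) →
      ∃ I : Finset (Fin N), m ≤ I.card ∧ ENNReal.ofReal ξ < μ (⋂ i ∈ I, X i)

lemma berg_base {ε : ℝ} (hε : 0 < ε) {m : ℕ} (hm : m ≤ 1) : BergStmt m ε := by
  refine ⟨1, ε/2, by linarith, ?_⟩
  intro V mV μ hμ X hX hmeas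
  refine ⟨{0}, by simpa using hm, ?_⟩
  have : ⋂ i ∈ ({0} : Finset (Fin 1)), X i = X 0 := by simp
  rw [this]
  exact lt_of_lt_of_le ((ENNReal.ofReal_lt_ofReal_iff hε).mpr (by linarith)) (hmeas 0)

lemma berg (m : ℕ) : ∀ ε : ℝ, 0 < ε → BergStmt m ε := by
  induction m with
  | zero => exact fun ε hε => berg_base hε (by norm_num)
  | succ m ih =>
    intro ε hε
    rcases Nat.eq_zero_or_pos m with rfl | hm1
    · exact berg_base hε le_rfl
    -- choose n with 2 ≤ n and 2 ≤ n * ε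
    set n : ℕ := ⌈2/ε⌉₊ + 2 with hn
    have hn2 : 2 ≤ n := by omega
    have hnε : 2 ≤ (n : ℝ) * ε := by
      have h1 : 2/ε ≤ (⌈2/ε⌉₊ : ℝ) := Nat.le_ceil _
      have h2 : (2:ℝ)/ε * ε = 2 := by field_simp
      have h3 : (n : ℝ) = (⌈2/ε⌉₊ : ℝ) + 2 := by push_cast [hn]; ring
      nlinarith
    set δ : ℝ := 1/(4*(n:ℝ)^2) with hδ
    have hδpos : 0 < δ := by positivity
    obtain ⟨N', ξ', hξ', H'⟩ := ih δ hδpos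
    refine ⟨n * N', ξ', hξ', ?_⟩
    intro V mV μ hμ X hX hmeas
    have hcard : n * N' ≤ (Finset.univ : Finset (Fin (n * N'))).card := by
      simp
    obtain ⟨P, hPcard, hPgood, hPdis⟩ :=
      extract_pairs μ X hX hn2 hnε hmeas N' Finset.univ hcard
    set g : Fin N' → {x // x ∈ P} := ⇑(Finset.equivFinOfCardEq hPcard).symm with hg
    have hginj : Function.Injective g := (Finset.equivFinOfCardEq hPcard).symm.injective
    set Y : Fin N' → Set V := fun i => X ((g i : Fin (n*N') × Fin (n*N')).1) ∩
      X ((g i : Fin (n*N') × Fin (n*N')).2) with hY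
    have hYmeas : ∀ i, MeasurableSet (Y i) := fun i => (hX _).inter (hX _)
    have hYbig : ∀ i, ENNReal.ofReal δ ≤ μ (Y i) := by
      intro i
      exact le_of_lt (hPgood _ (g i).2).2.2.2
    obtain ⟨I', hI'card, hI'meas⟩ := H' V mV μ hμ Y hYmeas hYbig
    set f : Fin N' → Finset (Fin (n * N')) := fun i =>
      {(g i : Fin (n*N') × Fin (n*N')).1, (g i : Fin (n*N') × Fin (n*N')).2} with hf
    refine ⟨I'.biUnion f, ?_, ?_⟩
    · have hdisj : ∀ x ∈ I', ∀ y ∈ I', x ≠ y → Disjoint (f x) (f y) := by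
        intro x _ y _ hxy
        have hval : (g x : Fin (n*N') × Fin (n*N')) ≠ (g y : Fin (n*N') × Fin (n*N')) := by
          intro h
          exact hxy (hginj (Subtype.ext h))
        obtain ⟨a, b, c, d⟩ := hPdis _ (g x).2 _ (g y).2 hval
        rw [Finset.disjoint_left]
        intro v hv hv'
        simp only [hf, Finset.mem_insert, Finset.mem_singleton] at hv hv'
        rcases hv with rfl | rfl <;> rcases hv' with h | h
        · exact a h
        · exact b h
        · exact c h
        · exact d h
      rw [Finset.card_biUnion hdisj]
      have hfcard : ∀ i ∈ I', (f i).card = 2 := by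
        intro i _
        have hne := (hPgood _ (g i).2).2.2.1
        rw [hf]
        rw [Finset.card_insert_of_notMem (by simpa using hne), Finset.card_singleton]
      rw [Finset.sum_congr rfl hfcard, Finset.sum_const, smul_eq_mul]
      omega
    · refine lt_of_lt_of_le hI'meas (measure_mono ?_)
      intro x hx
      rw [Set.mem_iInter₂] at hx ⊢
      intro v hv
      rw [Finset.mem_biUnion] at hv
      obtain ⟨i, hi, hvi⟩ := hv
      have hxY := hx i hi
      simp only [hf, Finset.mem_insert, Finset.mem_singleton] at hvi
      rcases hvi with rfl | rfl
      · exact hxY.1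
      · exact hxY.2

/-- Bergelson's lemma: for every `ε > 0` and `m` there are `N` and `ξ > 0` such that any `N`
sets of measure at least `ε` in a probability space contain a subfamily of size at least `m`
whose intersection has measure more than `ξ`. -/
theorem stmt_3 (ε : ℝ) (hε : 0 < ε) (m : ℕ) :
    ∃ (N : ℕ) (ξ : ℝ), 0 < ξ ∧
      ∀ (V : Type) (mV : MeasurableSpace V) (μ : Measure V), IsProbabilityMeasure μ →
      ∀ X : Fin N → Set V, (∀ i, MeasurableSet (X i)) →
        (∀ i, ENNReal.ofReal ε ≤ μ (X i)) →
        ∃ I : Finset (Fin N), m ≤ I.card ∧ ENNReal.ofReal ξ < μ (⋂ i ∈ I, X i) :=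
  berg m ε hε
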